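/- arXiv:2204.12888 — 2 statements merged into one kernel-verified Lean document; each statement's English description precedes it below -/
import Mathlib

section
/- Let b : ℤ → ℂ with Σ_{l∈ℤ} l²|b_l|² < ∞. Then the double sum Σ_{i,j≥0} |b_{i−j}|²·(1 − √((min(i,j)+1)/(max(i,j)+1)))² is finite and bounded by (π²/24)·Σ_{l∈ℤ} l²|b_l|². -/
open Real

private lemma sqrt_bound_aux {m M : ℝ} (hm : 1 ≤ m) (hmM : m ≤ M) :
    (1 - Real.sqrt (m / M)) ^ 2 ≤ (M - m) ^ 2 / (4 * m ^ 2) := by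
  have hm0 : 0 < m := by linarith
  have hM0 : 0 < M := by linarith
  have ht0 : 0 < m / M := div_pos hm0 hM0
  have ht1 : m / M ≤ 1 := (div_le_one hM0).2 hmM
  set x := Real.sqrt (m / M) with hx
  have hx0 : 0 < x := Real.sqrt_pos.2 ht0
  have hxsq : x ^ 2 = m / M := Real.sq_sqrt ht0.le
  have hx1 : x ≤ 1 := by rw [hx]; exact Real.sqrt_le_one.2 ht1
  have h2 : m / M ≤ x := by nlinarith [mul_le_of_le_one_right hx0.le hx1]
  have key : 1 - x ≤ (M - m) / (2 * m) := by
    have h3 : 1 - x ≤ (1 - m / M) / (2 * (m / M)) := by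
      rw [le_div_iff₀ (by positivity)]
      have e1 : (1 - x) * (2 * (m / M)) ≤ (1 - x) * (2 * x) := by
        nlinarith [mul_nonneg (by linarith : (0:ℝ) ≤ 1 - x) (by linarith : (0:ℝ) ≤ x - m / M)]
      have e2 : (1 - x) * (2 * x) ≤ 1 - x ^ 2 := by nlinarith [sq_nonneg (1 - x)]
      rw [hxsq] at e2
      linarith
    calc 1 - x ≤ (1 - m / M) / (2 * (m / M)) := h3
      _ = (M - m) / (2 * m) := by field_simp
  have h0 : 0 ≤ 1 - x := by linarith
  calc (1 - x) ^ 2 ≤ ((M - m) / (2 * m)) ^ 2 := pow_le_pow_left₀ h0 key 2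
    _ = (M - m) ^ 2 / (4 * m ^ 2) := by ring

theorem double_sum_finite_and_bounded (b : ℤ → ℂ)
    (hb : Summable fun l : ℤ => (l : ℝ) ^ 2 * ‖b l‖ ^ 2) :
    Summable (fun p : ℕ × ℕ =>
      ‖b ((p.1 : ℤ) - p.2)‖ ^ 2 *
        (1 - Real.sqrt ((min p.1 p.2 + 1 : ℝ) / (max p.1 p.2 + 1))) ^ 2) ∧
    (∑' p : ℕ × ℕ,
      ‖b ((p.1 : ℤ) - p.2)‖ ^ 2 *
        (1 - Real.sqrt ((min p.1 p.2 + 1 : ℝ) / (max p.1 p.2 + 1))) ^ 2) ≤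
      Real.pi ^ 2 / 24 * ∑' l : ℤ, (l : ℝ) ^ 2 * ‖b l‖ ^ 2 := by
  -- the shifted Basel sum
  have hg : HasSum (fun k : ℕ => 1 / 4 * (1 / ((k : ℝ) + 1) ^ 2)) (π ^ 2 / 24) := by
    have h1 : HasSum (fun n : ℕ => 1 / 4 * ((1 : ℝ) / (n : ℝ) ^ 2)) (π ^ 2 / 24) := by
      have := hasSum_zeta_two.mul_left (1 / 4 : ℝ)
      rw [show (π ^ 2 / 24 : ℝ) = 1 / 4 * (π ^ 2 / 6) by ring]
      exact this
    have h2 := (hasSum_nat_add_iff (f := fun n : ℕ => 1 / 4 * ((1 : ℝ) / (n : ℝ) ^ 2)) 1).2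
      (by simpa using h1)
    convert h2 using 2 with k
    · rfl
    push_cast
    ring
  set f : ℤ → ℝ := fun l => (l : ℝ) ^ 2 * ‖b l‖ ^ 2 with hf
  set g : ℕ → ℝ := fun k => 1 / 4 * (1 / ((k : ℝ) + 1) ^ 2) with hgdef
  set G : ℤ × ℕ → ℝ := fun q => f q.1 * g q.2 with hG
  set e : ℕ × ℕ → ℤ × ℕ := fun p => ((p.1 : ℤ) - p.2, min p.1 p.2) with he
  have heinj : Function.Injective e := by
    rintro ⟨i, j⟩ ⟨i', j'⟩ h
    simp only [he, Prod.mk.injEq] at h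
    obtain ⟨h1, h2⟩ := h
    have : i = i' ∧ j = j' := by omega
    simp [this.1, this.2]
  have hGsum : Summable G := hb.mul_of_nonneg hg.summable
    (fun l => by positivity) (fun k => by positivity)
  have hle : ∀ p : ℕ × ℕ,
      ‖b ((p.1 : ℤ) - p.2)‖ ^ 2 *
        (1 - Real.sqrt ((min p.1 p.2 + 1 : ℝ) / (max p.1 p.2 + 1))) ^ 2 ≤ G (e p) := by
    rintro ⟨i, j⟩
    simp only [hG, he, hf, hgdef]
    have hm : (1 : ℝ) ≤ ((min i j : ℕ) : ℝ) + 1 := by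
      have : (0 : ℝ) ≤ ((min i j : ℕ) : ℝ) := Nat.cast_nonneg _
      linarith
    have hmM : ((min i j : ℕ) : ℝ) + 1 ≤ ((max i j : ℕ) : ℝ) + 1 := by
      have h := min_le_max (a := i) (b := j)
      have := (Nat.cast_le (α := ℝ)).2 h
      linarith
    have hs := sqrt_bound_aux hm hmM
    have hsq : ((((max i j : ℕ) : ℝ) + 1) - (((min i j : ℕ) : ℝ) + 1)) ^ 2
        = ((i : ℝ) - j) ^ 2 := by
      rcases le_total i j with h | h
      · rw [min_eq_left h, max_eq_right h]; push_cast; ring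
      · rw [min_eq_right h, max_eq_left h]; push_cast; ring
    have hne : (((min i j : ℕ) : ℝ) + 1) ≠ 0 := by positivity
    calc ‖b ((i : ℤ) - j)‖ ^ 2 *
          (1 - Real.sqrt ((((min i j : ℕ) : ℝ) + 1) / (((max i j : ℕ) : ℝ) + 1))) ^ 2
        ≤ ‖b ((i : ℤ) - j)‖ ^ 2 *
          (((((max i j : ℕ) : ℝ) + 1) - (((min i j : ℕ) : ℝ) + 1)) ^ 2
            / (4 * (((min i j : ℕ) : ℝ) + 1) ^ 2)) :=
          mul_le_mul_of_nonneg_left hs (by positivity)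
      _ = (((i : ℤ) - j : ℤ) : ℝ) ^ 2 * ‖b ((i : ℤ) - j)‖ ^ 2 *
          (1 / 4 * (1 / (((min i j : ℕ) : ℝ) + 1) ^ 2)) := by
          rw [hsq]
          field_simp
          push_cast
          ring
  have hTsum : Summable (fun p : ℕ × ℕ =>
      ‖b ((p.1 : ℤ) - p.2)‖ ^ 2 *
        (1 - Real.sqrt ((min p.1 p.2 + 1 : ℝ) / (max p.1 p.2 + 1))) ^ 2) :=
    Summable.of_nonneg_of_le (fun p => by positivity) hle (hGsum.comp_injective heinj)
  refine ⟨hTsum, ?_⟩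
  have h2 : (∑' p : ℕ × ℕ,
      ‖b ((p.1 : ℤ) - p.2)‖ ^ 2 *
        (1 - Real.sqrt ((min p.1 p.2 + 1 : ℝ) / (max p.1 p.2 + 1))) ^ 2) ≤ ∑' q, G q :=
    Summable.tsum_le_tsum_of_inj e heinj (fun c _ => by positivity) hle hTsum hGsum
  have h3 : ∑' q, G q = (∑' l, f l) * (∑' k, g k) := (Summable.tsum_mul_tsum hb hg.summable hGsum).symm
  rw [h3, hg.tsum_eq] at h2
  calc (∑' p : ℕ × ℕ,
      ‖b ((p.1 : ℤ) - p.2)‖ ^ 2 *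
        (1 - Real.sqrt ((min p.1 p.2 + 1 : ℝ) / (max p.1 p.2 + 1))) ^ 2)
      ≤ (∑' l, f l) * (π ^ 2 / 24) := h2
    _ = Real.pi ^ 2 / 24 * ∑' l : ℤ, (l : ℝ) ^ 2 * ‖b l‖ ^ 2 := by rw [hf]; ring
end

section
/- Let b : ℤ → ℂ with M := sup_{l∈ℤ}(1+|l|)|b_l| < ∞ and Σ_{l} l²|b_l|² < ∞. Define for i,j ≥ 0: τ_{i,j} = √((min(i,j)+1)/(max(i,j)+1))·b_{i−j}. Then for each fixed j, Σ_{i≥0} |τ_{i,j} − b_{i−j}|² ≤ (π²/24)·Σ_{l∈ℤ} l²|b_l|², i.e. the columns of the difference matrix are uniformly square-summable. -/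
lemma sqrt_helper (m Mx : ℝ) (hm0 : 0 ≤ m) (hmM : m ≤ Mx) :
    (Real.sqrt ((m + 1) / (Mx + 1)) - 1) ^ 2 ≤ (Mx - m) ^ 2 / 4 := by
  have hMx1 : (0:ℝ) < Mx + 1 := by linarith
  have hr : (0:ℝ) ≤ (m + 1) / (Mx + 1) := by positivity
  set s : ℝ := Real.sqrt ((m + 1) / (Mx + 1)) with hsdef
  have hs0 : 0 ≤ s := Real.sqrt_nonneg _
  have hs2 : s ^ 2 = (m + 1) / (Mx + 1) := Real.sq_sqrt hr
  have hs2' : s ^ 2 * (Mx + 1) = m + 1 := by rw [hs2]; field_simp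
  have hs1 : s ≤ 1 := Real.sqrt_le_one.mpr (by rw [div_le_one hMx1]; linarith)
  have hkey : 1 ≤ (Mx + 1) * s := by
    nlinarith [sq_nonneg ((Mx + 1) * s - 1), sq_nonneg ((Mx + 1) * s + 1)]
  have hA : 2 ≤ (1 + s) * (Mx + 1) := by nlinarith
  have hMm : Mx - m = (1 - s) * ((1 + s) * (Mx + 1)) := by nlinarith
  have h2 : 2 * (1 - s) ≤ Mx - m := by
    nlinarith [mul_nonneg (by linarith : (0:ℝ) ≤ 1 - s)
      (by linarith : (0:ℝ) ≤ (1 + s) * (Mx + 1) - 2)]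
  nlinarith [mul_nonneg (by linarith : (0:ℝ) ≤ Mx - m - 2 * (1 - s))
    (by linarith : (0:ℝ) ≤ Mx - m + 2 * (1 - s))]

lemma sqrt_ratio_bound (i j : ℕ) :
    (Real.sqrt ((min i j + 1 : ℝ) / (max i j + 1)) - 1) ^ 2 ≤ ((i : ℝ) - j) ^ 2 / 4 := by
  rcases le_total i j with h | h
  · rw [min_eq_left h, max_eq_right h]
    have h' : (i : ℝ) ≤ j := by exact_mod_cast h
    have := sqrt_helper (i : ℝ) (j : ℝ) (Nat.cast_nonneg i) h'
    have heq : ((i : ℝ) - j) ^ 2 = ((j : ℝ) - i) ^ 2 := by ring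
    rw [heq]
    convert this using 3 <;> push_cast <;> ring
  · rw [min_eq_right h, max_eq_left h]
    have h' : (j : ℝ) ≤ i := by exact_mod_cast h
    have := sqrt_helper (j : ℝ) (i : ℝ) (Nat.cast_nonneg j) h'
    convert this using 3 <;> push_cast <;> ring

theorem columns_uniformly_square_summable (b : ℤ → ℂ) (M : ℝ)
    (hM : ∀ l : ℤ, (1 + |(l : ℝ)|) * ‖b l‖ ≤ M)
    (hsum : Summable fun l : ℤ => (l : ℝ) ^ 2 * ‖b l‖ ^ 2) (j : ℕ) :
    Summable (fun i : ℕ =>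
      ‖Real.sqrt ((min i j + 1 : ℝ) / (max i j + 1)) * b ((i : ℤ) - j) - b ((i : ℤ) - j)‖ ^ 2) ∧
    (∑' i : ℕ,
      ‖Real.sqrt ((min i j + 1 : ℝ) / (max i j + 1)) * b ((i : ℤ) - j) - b ((i : ℤ) - j)‖ ^ 2) ≤
      Real.pi ^ 2 / 24 * ∑' l : ℤ, (l : ℝ) ^ 2 * ‖b l‖ ^ 2 := by
  set f : ℕ → ℝ := fun i =>
    ‖Real.sqrt ((min i j + 1 : ℝ) / (max i j + 1)) * b ((i : ℤ) - j) - b ((i : ℤ) - j)‖ ^ 2 with hf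
  set g : ℕ → ℝ := fun i => ((i : ℝ) - j) ^ 2 * ‖b ((i : ℤ) - j)‖ ^ 2 with hg
  have he : Function.Injective (fun i : ℕ => (i : ℤ) - (j : ℤ)) := by
    intro a b h
    simp only at h
    omega
  have hgs : Summable g := by
    have h := hsum.comp_injective he
    exact h.congr fun i => by simp only [Function.comp, hg]; push_cast; ring
  have hpt : ∀ i : ℕ, f i ≤ (1 / 4) * g i := by
    intro i
    have hfac : (Real.sqrt ((min i j + 1 : ℝ) / (max i j + 1)) : ℂ) * b ((i : ℤ) - j)
        - b ((i : ℤ) - j)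
        = ((Real.sqrt ((min i j + 1 : ℝ) / (max i j + 1)) - 1 : ℝ) : ℂ) * b ((i : ℤ) - j) := by
      push_cast; ring
    have : f i = (Real.sqrt ((min i j + 1 : ℝ) / (max i j + 1)) - 1) ^ 2
        * ‖b ((i : ℤ) - j)‖ ^ 2 := by
      rw [hf]
      simp only [hfac, norm_mul, Complex.norm_real, mul_pow, Real.norm_eq_abs, sq_abs]
    rw [this, hg]
    have hb := sq_nonneg ‖b ((i : ℤ) - j)‖
    have := sqrt_ratio_bound i j
    nlinarith [sq_nonneg ‖b ((i : ℤ) - j)‖]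
  have hfs : Summable f :=
    Summable.of_nonneg_of_le (fun i => sq_nonneg _) hpt (hgs.mul_left _)
  refine ⟨hfs, ?_⟩
  have h1 : (∑' i, f i) ≤ ∑' i, (1 / 4) * g i :=
    Summable.tsum_le_tsum hpt hfs (hgs.mul_left _)
  have h2 : (∑' i, (1 / 4) * g i) = (1 / 4) * ∑' i, g i := tsum_mul_left
  have h3 : (∑' i, g i) ≤ ∑' l : ℤ, (l : ℝ) ^ 2 * ‖b l‖ ^ 2 := by
    apply Summable.tsum_le_tsum_of_inj (fun i : ℕ => (i : ℤ) - (j : ℤ)) he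
    · intro c _; positivity
    · intro i; simp [hg]
    · exact hgs
    · exact hsum
  have hS0 : (0:ℝ) ≤ ∑' l : ℤ, (l : ℝ) ^ 2 * ‖b l‖ ^ 2 :=
    tsum_nonneg fun l => by positivity
  have hpi : (1:ℝ) / 4 ≤ Real.pi ^ 2 / 24 := by
    nlinarith [Real.pi_gt_three]
  calc (∑' i, f i) ≤ (1/4) * ∑' i, g i := by rw [← h2]; exact h1
    _ ≤ (1/4) * ∑' l : ℤ, (l : ℝ) ^ 2 * ‖b l‖ ^ 2 := by
        exact mul_le_mul_of_nonneg_left h3 (by norm_num)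
    _ ≤ Real.pi ^ 2 / 24 * ∑' l : ℤ, (l : ℝ) ^ 2 * ‖b l‖ ^ 2 :=
        mul_le_mul_of_nonneg_right hpi hS0
end
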